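/- With the twisted GKLO operators and the rational function S as in the context: suppose i and i+1 both lie in I, let 1 ≤ k ≤ m_i and 1 ≤ l ≤ m_{i+1}. Then the following three identities of ℂ-linear endomorphisms of F hold: (a) κ_{i,k} ∘ κ'_{i,k} ∘ κ_{i+1,l} = M( (γ_{i,k}² − (γ_{i+1,l} + ½ℏ)²) / (4(γ_{i,k} − ½ℏ)(γ_{i,k} + ½ℏ)) · S_{i,k}^{i+1,l} ) ∘ κ_{i+1,l}; (b) κ_{i,k} ∘ κ_{i+1,l} ∘ κ'_{i,k} = M( ((γ_{i,k} − ½ℏ)² − γ_{i+1,l}²) / (4(γ_{i,k} − ½ℏ)(γ_{i,k} + ½ℏ)) · S_{i,k}^{i+1,l} ) ∘ κ_{i+1,l}; (c) κ_{i+1,l} ∘ κ_{i,k} ∘ κ'_{i,k} = M( (γ_{i,k}² − (γ_{i+1,l} − ½ℏ)²) / (4(γ_{i,k} − ½ℏ)(γ_{i,k} + ½ℏ)) · S_{i,k}^{i+1,l} ) ∘ κ_{i+1,l}. -/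
import Mathlib

set_option maxHeartbeats 2000000
set_option synthInstance.maxHeartbeats 400000


/- Twisted GKLO representation setup (type AI).
   Indices: `i ∈ I = {1,…,n−1}`, `1 ≤ k ≤ m i`, with conventions `m 0 = m n = 0`
   (and `lam 0 = lam n = 0`), so that the indeterminates are exactly
   `ℏ`, `γ_{i,k}` (`i ∈ I`, `1 ≤ k ≤ m i`), `r_{i,t}` (`i ∈ I`, `1 ≤ t ≤ lam i`). -/

noncomputable section

/-- The indexing type of the indeterminates: `ℏ`, the `γ_{i,k}` and the `r_{i,t}`. -/
abbrev GVar (n : ℕ) (m lam : ℕ → ℕ) : Type :=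
  Unit ⊕ ((Σ i : Fin (n + 1), Fin (m i)) ⊕ (Σ i : Fin (n + 1), Fin (lam i)))

/-- `F`, the fraction field of the polynomial ring over `ℂ` in the indeterminates. -/
abbrev GF (n : ℕ) (m lam : ℕ → ℕ) : Type :=
  FractionRing (MvPolynomial (GVar n m lam) ℂ)

/-- The indeterminate `ℏ`. -/
def hb (n : ℕ) (m lam : ℕ → ℕ) : GF n m lam :=
  algebraMap (MvPolynomial (GVar n m lam) ℂ) (GF n m lam) (MvPolynomial.X (Sum.inl ()))

/-- The indeterminate `γ_{i,k}` (for `1 ≤ k ≤ m i`, `i ≤ n`; junk value `0` otherwise). -/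
def gam (n : ℕ) (m lam : ℕ → ℕ) (i k : ℕ) : GF n m lam :=
  if h : i < n + 1 ∧ k - 1 < m i then
    algebraMap (MvPolynomial (GVar n m lam) ℂ) (GF n m lam)
      (MvPolynomial.X (Sum.inr (Sum.inl ⟨⟨i, h.1⟩, ⟨k - 1, h.2⟩⟩)))
  else 0

/-- The indeterminate `r_{i,t}` (for `1 ≤ t ≤ lam i`, `i ≤ n`; junk value `0` otherwise). -/
def rv (n : ℕ) (m lam : ℕ → ℕ) (i t : ℕ) : GF n m lam :=
  if h : i < n + 1 ∧ t - 1 < lam i then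
    algebraMap (MvPolynomial (GVar n m lam) ℂ) (GF n m lam)
      (MvPolynomial.X (Sum.inr (Sum.inr ⟨⟨i, h.1⟩, ⟨t - 1, h.2⟩⟩)))
  else 0

/-- `ξ_{i,k} = γ_{i,k} + ℏ`. -/
def xi (n : ℕ) (m lam : ℕ → ℕ) (i k : ℕ) : GF n m lam :=
  gam n m lam i k + hb n m lam

/-- `R_i(x) = ∏_{t=1}^{λ_i} (x² − r_{i,t}²)`. -/
def RR (n : ℕ) (m lam : ℕ → ℕ) (i : ℕ) (x : GF n m lam) : GF n m lam :=
  ∏ t ∈ Finset.Icc 1 (lam i), (x ^ 2 - rv n m lam i t ^ 2)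

/-- The coefficient `c_{i,k}` of the twisted GKLO operator `κ_{i,k}`. -/
def cc (n : ℕ) (m lam : ℕ → ℕ) (i k : ℕ) : GF n m lam :=
  ((∏ l ∈ Finset.Icc 1 (m (i + 1)),
      (gam n m lam i k ^ 2 - (gam n m lam (i + 1) l + hb n m lam / 2) ^ 2)) *
    ∏ l ∈ Finset.Icc 1 (m (i - 1)),
      (gam n m lam i k + gam n m lam (i - 1) l + hb n m lam / 2)) /
  (2 * (gam n m lam i k - hb n m lam / 2) *
    ∏ l ∈ (Finset.Icc 1 (m i)).erase k, (gam n m lam i k ^ 2 - gam n m lam i l ^ 2))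

/-- The coefficient `c'_{i,k}` of the twisted GKLO operator `κ'_{i,k}`. -/
def cc' (n : ℕ) (m lam : ℕ → ℕ) (i k : ℕ) : GF n m lam :=
  (RR n m lam i (xi n m lam i k) *
    ∏ l ∈ Finset.Icc 1 (m (i - 1)),
      (xi n m lam i k - gam n m lam (i - 1) l - hb n m lam / 2)) /
  (2 * (gam n m lam i k + 3 * hb n m lam / 2) *
    ∏ l ∈ (Finset.Icc 1 (m i)).erase k, (xi n m lam i k ^ 2 - xi n m lam i l ^ 2))

/-- `M(f)`, the multiplication operator `x ↦ f·x`, as a `ℂ`-linear endomorphism of `F`. -/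
def Mop (n : ℕ) (m lam : ℕ → ℕ) (f : GF n m lam) : Module.End ℂ (GF n m lam) :=
  LinearMap.mulLeft ℂ f

/-- `κ_{i,k} = M(c_{i,k}) ∘ σ⁻_{i,k}`, where `σ` is the family of automorphisms `σ⁻`. -/
def kap (n : ℕ) (m lam : ℕ → ℕ) (σ : ℕ → ℕ → (GF n m lam ≃ₐ[ℂ] GF n m lam))
    (i k : ℕ) : Module.End ℂ (GF n m lam) :=
  Mop n m lam (cc n m lam i k) * (σ i k).toLinearMap

/-- `κ'_{i,k} = M(c'_{i,k}) ∘ σ⁺_{i,k}`, where `σ` is the family of automorphisms `σ⁺`. -/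
def kap' (n : ℕ) (m lam : ℕ → ℕ) (σ : ℕ → ℕ → (GF n m lam ≃ₐ[ℂ] GF n m lam))
    (i k : ℕ) : Module.End ℂ (GF n m lam) :=
  Mop n m lam (cc' n m lam i k) * (σ i k).toLinearMap

/-- The Cartan matrix of `sl_n`: `a_{ii} = 2`, `a_{ij} = −1` if `|i−j|=1`, else `0`. -/
def cartan (i j : ℕ) : ℤ :=
  if i = j then 2 else if i + 1 = j ∨ j + 1 = i then -1 else 0

/-- The rational function `S_{i,k}^{i+1,l}`. -/
def Sfun (n : ℕ) (m lam : ℕ → ℕ) (i k l : ℕ) : GF n m lam :=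
  (RR n m lam i (gam n m lam i k) *
      ((∏ l' ∈ Finset.Icc 1 (m (i - 1)),
          (gam n m lam i k ^ 2 - (gam n m lam (i - 1) l' + hb n m lam / 2) ^ 2)) *
        ∏ l' ∈ Finset.Icc 1 (m (i + 1)),
          (gam n m lam i k ^ 2 - (gam n m lam (i + 1) l' + hb n m lam / 2) ^ 2))) /
  ((gam n m lam i k ^ 2 - (gam n m lam (i + 1) l + hb n m lam / 2) ^ 2) *
    ∏ l' ∈ (Finset.Icc 1 (m i)).erase k,
      ((gam n m lam i k ^ 2 - gam n m lam i l' ^ 2) *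
        (gam n m lam i k ^ 2 - xi n m lam i l' ^ 2)))

abbrev GPoly (n : ℕ) (m lam : ℕ → ℕ) := MvPolynomial (GVar n m lam) ℂ

lemma GF.inj (n : ℕ) (m lam : ℕ → ℕ) :
    Function.Injective (algebraMap (GPoly n m lam) (GF n m lam)) :=
  IsFractionRing.injective _ _

lemma GF.ne_zero_of_eval (n : ℕ) (m lam : ℕ → ℕ) (p : GPoly n m lam) (v : GVar n m lam → ℂ)
    (h : MvPolynomial.eval v p ≠ 0) :
    algebraMap (GPoly n m lam) (GF n m lam) p ≠ 0 := by
  intro h0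
  apply h
  rw [show p = 0 from GF.inj n m lam (by simpa using h0)]
  simp

lemma GF.scaled_ne_zero (n : ℕ) (m lam : ℕ → ℕ) (x c : GF n m lam) (p : GPoly n m lam)
    (v : GVar n m lam → ℂ) (h : c * x = algebraMap _ _ p) (hev : MvPolynomial.eval v p ≠ 0) :
    x ≠ 0 := by
  intro h0; rw [h0, mul_zero] at h
  exact GF.ne_zero_of_eval n m lam p v hev h.symm

lemma GF.equiv_ext (n : ℕ) (m lam : ℕ → ℕ) (e1 e2 : GF n m lam ≃ₐ[ℂ] GF n m lam)
    (h : ∀ v : GVar n m lam,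
      e1 (algebraMap (GPoly n m lam) (GF n m lam) (MvPolynomial.X v)) =
      e2 (algebraMap (GPoly n m lam) (GF n m lam) (MvPolynomial.X v))) :
    ∀ x, e1 x = e2 x := by
  have hr : (e1 : GF n m lam →+* GF n m lam) = e2 := by
    apply IsLocalization.ringHom_ext (nonZeroDivisors (GPoly n m lam))
    apply MvPolynomial.ringHom_ext
    · intro r
      simp only [RingHom.comp_apply, RingHom.coe_coe]
      rw [show (MvPolynomial.C r : GPoly n m lam) = algebraMap ℂ (GPoly n m lam) r from rfl,
        ← IsScalarTower.algebraMap_apply]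
      simp
    · intro v; simpa using h v
  intro x; exact RingHom.congr_fun hr x

lemma gam_eqX (n : ℕ) (m lam : ℕ → ℕ) (i k : ℕ) (h1 : i < n + 1) (h2 : k - 1 < m i) :
    gam n m lam i k =
      algebraMap (GPoly n m lam) (GF n m lam)
        (MvPolynomial.X (Sum.inr (Sum.inl ⟨⟨i, h1⟩, ⟨k - 1, h2⟩⟩))) := by
  rw [gam, dif_pos ⟨h1, h2⟩]

lemma rv_eqX (n : ℕ) (m lam : ℕ → ℕ) (i t : ℕ) (h1 : i < n + 1) (h2 : t - 1 < lam i) :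
    rv n m lam i t =
      algebraMap (GPoly n m lam) (GF n m lam)
        (MvPolynomial.X (Sum.inr (Sum.inr ⟨⟨i, h1⟩, ⟨t - 1, h2⟩⟩))) := by
  rw [rv, dif_pos ⟨h1, h2⟩]

lemma gam_X (n : ℕ) (m lam : ℕ → ℕ) (i' : Fin (n + 1)) (k' : Fin (m i')) :
    algebraMap (GPoly n m lam) (GF n m lam) (MvPolynomial.X (Sum.inr (Sum.inl ⟨i', k'⟩))) =
      gam n m lam i' (k'.val + 1) := by
  rw [gam, dif_pos ⟨i'.isLt, by simp⟩]
  congr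

lemma rv_X (n : ℕ) (m lam : ℕ → ℕ) (i' : Fin (n + 1)) (t' : Fin (lam i')) :
    algebraMap (GPoly n m lam) (GF n m lam) (MvPolynomial.X (Sum.inr (Sum.inr ⟨i', t'⟩))) =
      rv n m lam i' (t'.val + 1) := by
  rw [rv, dif_pos ⟨i'.isLt, by simp⟩]
  congr

lemma hb_eqX (n : ℕ) (m lam : ℕ → ℕ) :
    hb n m lam = algebraMap (GPoly n m lam) (GF n m lam) (MvPolynomial.X (Sum.inl ())) := rfl

lemma scalar_abc {K : Type*} [Field K] (γ γp H A Nm Nm' Pp' P₂ T Q Q' Qp : K)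
    (h2 : (2:K) ≠ 0)
    (hγm : γ - H/2 ≠ 0) (hγp : γ + H/2 ≠ 0)
    (hE : γ^2 - (γp + H/2)^2 ≠ 0) (hγpm : γp - H/2 ≠ 0)
    (hQ : Q ≠ 0) (hQ' : Q' ≠ 0) (hQp : Qp ≠ 0) :
    (((γ^2 - (γp + H/2)^2) * Pp' * Nm) / (2 * (γ - H/2) * Q)) *
        ((A * Nm') / (2 * (γ + H/2) * Q')) =
      (γ^2 - (γp + H/2)^2) / (4 * (γ - H/2) * (γ + H/2)) *
        ((A * ((Nm * Nm') * ((γ^2 - (γp + H/2)^2) * Pp'))) /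
          ((γ^2 - (γp + H/2)^2) * (Q * Q'))) ∧
    (((γ^2 - (γp + H/2)^2) * Pp' * Nm) / (2 * (γ - H/2) * Q)) *
        ((P₂ * ((γp + γ - H/2) * T)) / (2 * (γp - H/2) * Qp)) *
        ((A * Nm') / (2 * (γ + H/2) * Q')) =
      ((γ - H/2)^2 - γp^2) / (4 * (γ - H/2) * (γ + H/2)) *
        ((A * ((Nm * Nm') * ((γ^2 - (γp + H/2)^2) * Pp'))) /
          ((γ^2 - (γp + H/2)^2) * (Q * Q'))) *
        ((P₂ * ((γp + γ + H/2) * T)) / (2 * (γp - H/2) * Qp)) ∧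
    (((P₂ * ((γp + γ + H/2) * T)) / (2 * (γp - H/2) * Qp)) *
        (((γ^2 - (γp - H/2)^2) * Pp' * Nm) / (2 * (γ - H/2) * Q)) *
        ((A * Nm') / (2 * (γ + H/2) * Q')) =
      (γ^2 - (γp - H/2)^2) / (4 * (γ - H/2) * (γ + H/2)) *
        ((A * ((Nm * Nm') * ((γ^2 - (γp + H/2)^2) * Pp'))) /
          ((γ^2 - (γp + H/2)^2) * (Q * Q'))) *
        ((P₂ * ((γp + γ + H/2) * T)) / (2 * (γp - H/2) * Qp))) := by
  have h4 : (4:K) ≠ 0 := by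
    intro h; apply h2; have : (2:K)*2 = 4 := by norm_num
    rcases mul_eq_zero.1 (this.trans h) with h' | h' <;> exact h'
  have hden : ∀ {a b : K}, a ≠ 0 → b ≠ 0 → a * b ≠ 0 := fun ha hb => mul_ne_zero ha hb
  refine ⟨?_, ?_, ?_⟩ <;>
  · simp only [div_mul_div_comm]
    rw [div_eq_div_iff (by repeat first | assumption | apply mul_ne_zero)
        (by repeat first | assumption | apply mul_ne_zero)]
    ring

theorem gklo_xxx_S_components (n : ℕ) (hn : 2 ≤ n) (m lam : ℕ → ℕ)
    (hm0 : m 0 = 0) (hmn : m n = 0) (hlam0 : lam 0 = 0) (hlamn : lam n = 0)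
    (σm σp : ℕ → ℕ → (GF n m lam ≃ₐ[ℂ] GF n m lam))
    (hσmh : ∀ i k, σm i k (hb n m lam) = hb n m lam)
    (hσph : ∀ i k, σp i k (hb n m lam) = hb n m lam)
    (hσmr : ∀ i k i' t, σm i k (rv n m lam i' t) = rv n m lam i' t)
    (hσpr : ∀ i k i' t, σp i k (rv n m lam i' t) = rv n m lam i' t)
    (hσmg : ∀ i k i' k', 1 ≤ i' → i' ≤ n - 1 → 1 ≤ k' → k' ≤ m i' →
      σm i k (gam n m lam i' k') =
        if i' = i ∧ k' = k then gam n m lam i k - hb n m lam else gam n m lam i' k')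
    (hσpg : ∀ i k i' k', 1 ≤ i' → i' ≤ n - 1 → 1 ≤ k' → k' ≤ m i' →
      σp i k (gam n m lam i' k') =
        if i' = i ∧ k' = k then gam n m lam i k + hb n m lam else gam n m lam i' k')
    (i k l : ℕ)
    (hi : 1 ≤ i) (hi1 : i + 1 ≤ n - 1) (hk : 1 ≤ k) (hk' : k ≤ m i)
    (hl : 1 ≤ l) (hl' : l ≤ m (i + 1)) :
    (kap n m lam σm i k * kap' n m lam σp i k * kap n m lam σm (i + 1) l =
        Mop n m lam
            ((gam n m lam i k ^ 2 - (gam n m lam (i + 1) l + hb n m lam / 2) ^ 2) /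
                (4 * (gam n m lam i k - hb n m lam / 2) * (gam n m lam i k + hb n m lam / 2)) *
              Sfun n m lam i k l) *
          kap n m lam σm (i + 1) l) ∧
      (kap n m lam σm i k * kap n m lam σm (i + 1) l * kap' n m lam σp i k =
        Mop n m lam
            (((gam n m lam i k - hb n m lam / 2) ^ 2 - gam n m lam (i + 1) l ^ 2) /
                (4 * (gam n m lam i k - hb n m lam / 2) * (gam n m lam i k + hb n m lam / 2)) *
              Sfun n m lam i k l) *
          kap n m lam σm (i + 1) l) ∧
      (kap n m lam σm (i + 1) l * kap n m lam σm i k * kap' n m lam σp i k =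
        Mop n m lam
            ((gam n m lam i k ^ 2 - (gam n m lam (i + 1) l - hb n m lam / 2) ^ 2) /
                (4 * (gam n m lam i k - hb n m lam / 2) * (gam n m lam i k + hb n m lam / 2)) *
              Sfun n m lam i k l) *
          kap n m lam σm (i + 1) l) := by
  have hin : i ≤ n - 1 := by omega
  -- Em : σm i k ∘ σp i k = id
  have Em : ∀ x, σm i k (σp i k x) = x := by
    have := GF.equiv_ext n m lam ((σp i k).trans (σm i k)) AlgEquiv.refl ?_
    · intro x; simpa using this x
    · rintro (⟨⟩ | ⟨⟨⟨i', hi'⟩, ⟨k', hk2⟩⟩ | ⟨⟨i', hi'⟩, ⟨t', ht2⟩⟩⟩)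
      · rw [← hb_eqX]
        simp [AlgEquiv.trans_apply, hσmh, hσph]
      · rw [gam_X n m lam ⟨i', hi'⟩ ⟨k', hk2⟩]
        simp only [Fin.val_mk]
        have hk2' : k' < m i' := hk2
        have hne0 : i' ≠ 0 := fun h => by subst h; omega
        have hnen : i' ≠ n := fun h => by subst h; omega
        rw [AlgEquiv.trans_apply, AlgEquiv.coe_refl, id_eq,
          hσpg i k i' (k' + 1) (by omega) (by omega) (by omega) (by omega)]
        split_ifs with hc
        · obtain ⟨h1, h2⟩ := hc
          rw [h1, h2, map_add, hσmh, hσmg i k i k hi hin hk hk', if_pos ⟨rfl, rfl⟩]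
          ring
        · rw [hσmg i k i' (k' + 1) (by omega) (by omega) (by omega) (by omega), if_neg hc]
      · rw [rv_X n m lam ⟨i', hi'⟩ ⟨t', ht2⟩]
        simp [AlgEquiv.trans_apply, hσmr, hσpr]
  -- Eb : σm i k ∘ σm (i+1) l ∘ σp i k = σm (i+1) l
  have Eb : ∀ x, σm i k (σm (i + 1) l (σp i k x)) = σm (i + 1) l x := by
    have := GF.equiv_ext n m lam (((σp i k).trans (σm (i + 1) l)).trans (σm i k))
      (σm (i + 1) l) ?_
    · intro x; simpa using this x
    · rintro (⟨⟩ | ⟨⟨⟨i', hi'⟩, ⟨k', hk2⟩⟩ | ⟨⟨i', hi'⟩, ⟨t', ht2⟩⟩⟩)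
      · rw [← hb_eqX]; simp [AlgEquiv.trans_apply, hσmh, hσph]
      · rw [gam_X n m lam ⟨i', hi'⟩ ⟨k', hk2⟩]
        simp only [Fin.val_mk]
        have hk2' : k' < m i' := hk2
        have hne0 : i' ≠ 0 := fun h => by subst h; omega
        have hnen : i' ≠ n := fun h => by subst h; omega
        rw [AlgEquiv.trans_apply, AlgEquiv.trans_apply,
          hσpg i k i' (k' + 1) (by omega) (by omega) (by omega) (by omega)]
        split_ifs with hc
        · obtain ⟨h1, h2⟩ := hc
          rw [h1, h2, map_add, hσmh, hσmg (i + 1) l i k hi (by omega) hk hk',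
            if_neg (by omega), map_add, hσmh,
            hσmg i k i k hi hin hk hk', if_pos ⟨rfl, rfl⟩]
          ring
        · rw [hσmg (i + 1) l i' (k' + 1) (by omega) (by omega) (by omega) (by omega)]
          split_ifs with hc2
          · rw [map_sub, hσmh,
              hσmg i k (i + 1) l (by omega) (by omega) hl hl', if_neg (by omega)]
          · rw [hσmg i k i' (k' + 1) (by omega) (by omega) (by omega) (by omega), if_neg hc]
      · rw [rv_X n m lam ⟨i', hi'⟩ ⟨t', ht2⟩]
        simp [AlgEquiv.trans_apply, hσmr, hσpr]

  have hin : i ≤ n - 1 := by omega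
  have hiN : i < n + 1 := by omega
  have hipN : i + 1 < n + 1 := by omega
  have hk1m : k - 1 < m i := by omega
  have hl1m : l - 1 < m (i + 1) := by omega
  have two0 : (2 : GF n m lam) ≠ 0 := two_ne_zero
  -- point values of the automorphisms
  have hmgik : σm i k (gam n m lam i k) = gam n m lam i k - hb n m lam := by
    rw [hσmg i k i k hi hin hk hk', if_pos ⟨rfl, rfl⟩]
  have hmgip : σm i k (gam n m lam (i + 1) l) = gam n m lam (i + 1) l := by
    rw [hσmg i k (i + 1) l (by omega) (by omega) hl hl', if_neg (by omega)]
  have hmpgik : σm (i + 1) l (gam n m lam i k) = gam n m lam i k := by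
    rw [hσmg (i + 1) l i k hi hin hk hk', if_neg (by omega)]
  have hmpgip : σm (i + 1) l (gam n m lam (i + 1) l) = gam n m lam (i + 1) l - hb n m lam := by
    rw [hσmg (i + 1) l (i + 1) l (by omega) (by omega) hl hl', if_pos ⟨rfl, rfl⟩]
  -- fixed generators
  have hfix1 : ∀ l' ∈ Finset.Icc 1 (m (i - 1)),
      σm i k (gam n m lam (i - 1) l') = gam n m lam (i - 1) l' ∧
      σm (i + 1) l (gam n m lam (i - 1) l') = gam n m lam (i - 1) l' := by
    intro l' hl2
    rw [Finset.mem_Icc] at hl2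
    have h2i : 2 ≤ i := by
      by_contra h
      have hz : m (i - 1) = 0 := by rw [show i - 1 = 0 by omega]; exact hm0
      omega
    constructor
    · rw [hσmg i k (i - 1) l' (by omega) (by omega) hl2.1 hl2.2, if_neg (by omega)]
    · rw [hσmg (i + 1) l (i - 1) l' (by omega) (by omega) hl2.1 hl2.2, if_neg (by omega)]
  have hfixi : ∀ l' ∈ (Finset.Icc 1 (m i)).erase k,
      σm i k (gam n m lam i l') = gam n m lam i l' ∧
      σm (i + 1) l (gam n m lam i l') = gam n m lam i l' := by
    intro l' hl2
    rw [Finset.mem_erase, Finset.mem_Icc] at hl2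
    constructor
    · rw [hσmg i k i l' hi hin hl2.2.1 hl2.2.2, if_neg (by omega)]
    · rw [hσmg (i + 1) l i l' hi hin hl2.2.1 hl2.2.2, if_neg (by omega)]
  have hfixik : ∀ l' ∈ (Finset.Icc 1 (m i)).erase k,
      σm i k (gam n m lam i l') = gam n m lam i l' := fun l' hl2 => (hfixi l' hl2).1
  have hfixip1 : ∀ l' ∈ (Finset.Icc 1 (m (i + 1))).erase l,
      σm i k (gam n m lam (i + 1) l') = gam n m lam (i + 1) l' ∧
      σm (i + 1) l (gam n m lam (i + 1) l') = gam n m lam (i + 1) l' := by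
    intro l' hl2
    rw [Finset.mem_erase, Finset.mem_Icc] at hl2
    constructor
    · rw [hσmg i k (i + 1) l' (by omega) (by omega) hl2.2.1 hl2.2.2, if_neg (by omega)]
    · rw [hσmg (i + 1) l (i + 1) l' (by omega) (by omega) hl2.2.1 hl2.2.2, if_neg (by omega)]
  have hfixip2 : ∀ l' ∈ Finset.Icc 1 (m (i + 1 + 1)),
      σm i k (gam n m lam (i + 1 + 1) l') = gam n m lam (i + 1 + 1) l' := by
    intro l' hl2
    rw [Finset.mem_Icc] at hl2
    have h2i : i + 1 + 1 ≤ n - 1 := by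
      by_contra h
      have hz : m (i + 1 + 1) = 0 := by rw [show i + 1 + 1 = n by omega]; exact hmn
      omega
    rw [hσmg i k (i + 1 + 1) l' (by omega) (by omega) hl2.1 hl2.2, if_neg (by omega)]
  -- σm i k applied to cc'
  have hC1 : σm i k (cc' n m lam i k) = ((RR n m lam i (gam n m lam i k)) * (∏ l' ∈ Finset.Icc 1 (m (i - 1)), (gam n m lam i k - gam n m lam (i - 1) l' - hb n m lam / 2))) / (2 * (gam n m lam i k + hb n m lam / 2) * (∏ l' ∈ (Finset.Icc 1 (m i)).erase k, (gam n m lam i k ^ 2 - xi n m lam i l' ^ 2))) := by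
    have e1 : σm i k (RR n m lam i (xi n m lam i k)) = RR n m lam i (gam n m lam i k) := by
      rw [RR, RR, map_prod]
      refine Finset.prod_congr rfl fun t ht => ?_
      rw [xi, map_sub, map_pow, map_pow, map_add, hmgik, hσmh, hσmr]
      ring
    have e2 : σm i k (∏ l' ∈ Finset.Icc 1 (m (i - 1)),
        (xi n m lam i k - gam n m lam (i - 1) l' - hb n m lam / 2)) = ∏ l' ∈ Finset.Icc 1 (m (i - 1)), (gam n m lam i k - gam n m lam (i - 1) l' - hb n m lam / 2) := by
      rw [map_prod]
      refine Finset.prod_congr rfl fun l' hl2 => ?_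
      rw [xi, map_sub, map_sub, map_div₀, map_add, hmgik, hσmh, (hfix1 l' hl2).1, map_ofNat]
      ring
    have e3 : σm i k (2 * (gam n m lam i k + 3 * hb n m lam / 2)) = 2 * (gam n m lam i k + hb n m lam / 2) := by
      rw [map_mul, map_add, map_div₀, map_mul, hmgik, hσmh, map_ofNat, map_ofNat]
      ring
    have e4 : σm i k (∏ l' ∈ (Finset.Icc 1 (m i)).erase k,
        (xi n m lam i k ^ 2 - xi n m lam i l' ^ 2)) = ∏ l' ∈ (Finset.Icc 1 (m i)).erase k, (gam n m lam i k ^ 2 - xi n m lam i l' ^ 2) := by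
      rw [map_prod]
      refine Finset.prod_congr rfl fun l' hl2 => ?_
      rw [xi, xi, map_sub, map_pow, map_pow, map_add, map_add, hmgik, hσmh,
        (hfixi l' hl2).1]
      ring
    rw [cc', map_div₀, map_mul, map_mul, e1, e2, e3, e4]
  -- σm (i+1) l fixes cc'
  have hC2 : σm (i + 1) l (cc' n m lam i k) = cc' n m lam i k := by
    have e1 : σm (i + 1) l (RR n m lam i (xi n m lam i k)) = RR n m lam i (xi n m lam i k) := by
      rw [RR, map_prod]
      refine Finset.prod_congr rfl fun t ht => ?_
      rw [xi, map_sub, map_pow, map_pow, map_add, hmpgik, hσmh, hσmr]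
    have e2 : σm (i + 1) l (∏ l' ∈ Finset.Icc 1 (m (i - 1)),
        (xi n m lam i k - gam n m lam (i - 1) l' - hb n m lam / 2)) =
        ∏ l' ∈ Finset.Icc 1 (m (i - 1)),
          (xi n m lam i k - gam n m lam (i - 1) l' - hb n m lam / 2) := by
      rw [map_prod]
      refine Finset.prod_congr rfl fun l' hl2 => ?_
      rw [xi, map_sub, map_sub, map_div₀, map_add, hmpgik, hσmh, (hfix1 l' hl2).2, map_ofNat]
    have e3 : σm (i + 1) l (2 * (gam n m lam i k + 3 * hb n m lam / 2)) = 2 * (gam n m lam i k + 3 * hb n m lam / 2) := by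
      rw [map_mul, map_add, map_div₀, map_mul, hmpgik, hσmh, map_ofNat, map_ofNat]
    have e4 : σm (i + 1) l (∏ l' ∈ (Finset.Icc 1 (m i)).erase k,
        (xi n m lam i k ^ 2 - xi n m lam i l' ^ 2)) =
        ∏ l' ∈ (Finset.Icc 1 (m i)).erase k,
          (xi n m lam i k ^ 2 - xi n m lam i l' ^ 2) := by
      rw [map_prod]
      refine Finset.prod_congr rfl fun l' hl2 => ?_
      rw [xi, xi, map_sub, map_pow, map_pow, map_add, map_add, hmpgik, hσmh,
        (hfixi l' hl2).2]
    rw [cc', map_div₀, map_mul, map_mul, e1, e2, e3, e4]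
  -- σm (i+1) l fixes the value of hC1
  have hC3 : σm (i + 1) l (((RR n m lam i (gam n m lam i k)) * (∏ l' ∈ Finset.Icc 1 (m (i - 1)), (gam n m lam i k - gam n m lam (i - 1) l' - hb n m lam / 2))) / (2 * (gam n m lam i k + hb n m lam / 2) * (∏ l' ∈ (Finset.Icc 1 (m i)).erase k, (gam n m lam i k ^ 2 - xi n m lam i l' ^ 2)))) = ((RR n m lam i (gam n m lam i k)) * (∏ l' ∈ Finset.Icc 1 (m (i - 1)), (gam n m lam i k - gam n m lam (i - 1) l' - hb n m lam / 2))) / (2 * (gam n m lam i k + hb n m lam / 2) * (∏ l' ∈ (Finset.Icc 1 (m i)).erase k, (gam n m lam i k ^ 2 - xi n m lam i l' ^ 2))) := by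
    have e1 : σm (i + 1) l (RR n m lam i (gam n m lam i k)) = RR n m lam i (gam n m lam i k) := by
      rw [RR, map_prod]
      refine Finset.prod_congr rfl fun t ht => ?_
      rw [map_sub, map_pow, map_pow, hmpgik, hσmr]
    have e2 : σm (i + 1) l (∏ l' ∈ Finset.Icc 1 (m (i - 1)), (gam n m lam i k - gam n m lam (i - 1) l' - hb n m lam / 2)) = ∏ l' ∈ Finset.Icc 1 (m (i - 1)), (gam n m lam i k - gam n m lam (i - 1) l' - hb n m lam / 2) := by
      rw [map_prod]
      refine Finset.prod_congr rfl fun l' hl2 => ?_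
      rw [map_sub, map_sub, map_div₀, hmpgik, hσmh, (hfix1 l' hl2).2, map_ofNat]
    have e3 : σm (i + 1) l (2 * (gam n m lam i k + hb n m lam / 2)) = 2 * (gam n m lam i k + hb n m lam / 2) := by
      rw [map_mul, map_add, map_div₀, hmpgik, hσmh, map_ofNat]
    have e4 : σm (i + 1) l (∏ l' ∈ (Finset.Icc 1 (m i)).erase k, (gam n m lam i k ^ 2 - xi n m lam i l' ^ 2)) = ∏ l' ∈ (Finset.Icc 1 (m i)).erase k, (gam n m lam i k ^ 2 - xi n m lam i l' ^ 2) := by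
      rw [map_prod]
      refine Finset.prod_congr rfl fun l' hl2 => ?_
      rw [xi, map_sub, map_pow, map_pow, map_add, hmpgik, hσmh, (hfixi l' hl2).2]
    rw [map_div₀, map_mul, map_mul, e1, e2, e3, e4]
  -- σm i k applied to cc (i+1) l
  have hkmem : k ∈ Finset.Icc 1 (m i) := Finset.mem_Icc.mpr ⟨hk, hk'⟩
  have hlmem : l ∈ Finset.Icc 1 (m (i + 1)) := Finset.mem_Icc.mpr ⟨hl, hl'⟩
  have hsplitT : (∏ l' ∈ Finset.Icc 1 (m i), (gam n m lam (i + 1) l + gam n m lam i l' + hb n m lam / 2)) =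
      (gam n m lam (i + 1) l + gam n m lam i k + hb n m lam / 2) * (∏ l' ∈ (Finset.Icc 1 (m i)).erase k, (gam n m lam (i + 1) l + gam n m lam i l' + hb n m lam / 2)) :=
    (Finset.mul_prod_erase _ _ hkmem).symm
  have hsplitE : (∏ l' ∈ Finset.Icc 1 (m (i + 1)),
        (gam n m lam i k ^ 2 - (gam n m lam (i + 1) l' + hb n m lam / 2) ^ 2)) =
      (gam n m lam i k ^ 2 - (gam n m lam (i + 1) l + hb n m lam / 2) ^ 2) * (∏ l' ∈ (Finset.Icc 1 (m (i + 1))).erase l, (gam n m lam i k ^ 2 - (gam n m lam (i + 1) l' + hb n m lam / 2) ^ 2)) :=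
    (Finset.mul_prod_erase _ _ hlmem).symm
  have hC4 : σm i k (cc n m lam (i + 1) l) = ((∏ l' ∈ Finset.Icc 1 (m (i + 1 + 1)), (gam n m lam (i + 1) l ^ 2 - (gam n m lam (i + 1 + 1) l' + hb n m lam / 2) ^ 2)) * ((gam n m lam (i + 1) l + gam n m lam i k - hb n m lam / 2) * (∏ l' ∈ (Finset.Icc 1 (m i)).erase k, (gam n m lam (i + 1) l + gam n m lam i l' + hb n m lam / 2)))) / (2 * (gam n m lam (i + 1) l - hb n m lam / 2) * (∏ l' ∈ (Finset.Icc 1 (m (i + 1))).erase l, (gam n m lam (i + 1) l ^ 2 - gam n m lam (i + 1) l' ^ 2))) := by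
    rw [cc]
    simp only [Nat.add_sub_cancel]
    rw [hsplitT]
    have e1 : σm i k (∏ l' ∈ Finset.Icc 1 (m (i + 1 + 1)), (gam n m lam (i + 1) l ^ 2 - (gam n m lam (i + 1 + 1) l' + hb n m lam / 2) ^ 2)) = ∏ l' ∈ Finset.Icc 1 (m (i + 1 + 1)), (gam n m lam (i + 1) l ^ 2 - (gam n m lam (i + 1 + 1) l' + hb n m lam / 2) ^ 2) := by
      rw [map_prod]
      refine Finset.prod_congr rfl fun l' hl2 => ?_
      rw [map_sub, map_pow, map_pow, map_add, map_div₀, hmgip, hfixip2 l' hl2, hσmh,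
        map_ofNat]
    have e2a : σm i k (gam n m lam (i + 1) l + gam n m lam i k + hb n m lam / 2) = gam n m lam (i + 1) l + gam n m lam i k - hb n m lam / 2 := by
      rw [map_add, map_add, map_div₀, hmgip, hmgik, hσmh, map_ofNat]
      ring
    have e2b : σm i k (∏ l' ∈ (Finset.Icc 1 (m i)).erase k, (gam n m lam (i + 1) l + gam n m lam i l' + hb n m lam / 2)) = ∏ l' ∈ (Finset.Icc 1 (m i)).erase k, (gam n m lam (i + 1) l + gam n m lam i l' + hb n m lam / 2) := by
      rw [map_prod]
      refine Finset.prod_congr rfl fun l' hl2 => ?_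
      rw [map_add, map_add, map_div₀, hmgip, (hfixi l' hl2).1, hσmh, map_ofNat]
    have e3 : σm i k (2 * (gam n m lam (i + 1) l - hb n m lam / 2)) = 2 * (gam n m lam (i + 1) l - hb n m lam / 2) := by
      rw [map_mul, map_sub, map_div₀, hmgip, hσmh, map_ofNat]
    have e4 : σm i k (∏ l' ∈ (Finset.Icc 1 (m (i + 1))).erase l, (gam n m lam (i + 1) l ^ 2 - gam n m lam (i + 1) l' ^ 2)) = ∏ l' ∈ (Finset.Icc 1 (m (i + 1))).erase l, (gam n m lam (i + 1) l ^ 2 - gam n m lam (i + 1) l' ^ 2) := by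
      rw [map_prod]
      refine Finset.prod_congr rfl fun l' hl2 => ?_
      rw [map_sub, map_pow, map_pow, hmgip, (hfixip1 l' hl2).1]
    rw [map_div₀, map_mul, map_mul, map_mul, e1, e2a, e2b, e3, e4]
  -- σm (i+1) l applied to cc i k
  have hC5 : σm (i + 1) l (cc n m lam i k) = ((gam n m lam i k ^ 2 - (gam n m lam (i + 1) l - hb n m lam / 2) ^ 2) * (∏ l' ∈ (Finset.Icc 1 (m (i + 1))).erase l, (gam n m lam i k ^ 2 - (gam n m lam (i + 1) l' + hb n m lam / 2) ^ 2)) * (∏ l' ∈ Finset.Icc 1 (m (i - 1)), (gam n m lam i k + gam n m lam (i - 1) l' + hb n m lam / 2))) / (2 * (gam n m lam i k - hb n m lam / 2) * (∏ l' ∈ (Finset.Icc 1 (m i)).erase k, (gam n m lam i k ^ 2 - gam n m lam i l' ^ 2))) := by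
    rw [cc, hsplitE]
    have e1a : σm (i + 1) l (gam n m lam i k ^ 2 - (gam n m lam (i + 1) l + hb n m lam / 2) ^ 2) =
        gam n m lam i k ^ 2 - (gam n m lam (i + 1) l - hb n m lam / 2) ^ 2 := by
      rw [map_sub, map_pow, map_pow, map_add, map_div₀, hmpgik, hmpgip, hσmh, map_ofNat]
      ring
    have e1b : σm (i + 1) l (∏ l' ∈ (Finset.Icc 1 (m (i + 1))).erase l, (gam n m lam i k ^ 2 - (gam n m lam (i + 1) l' + hb n m lam / 2) ^ 2)) = ∏ l' ∈ (Finset.Icc 1 (m (i + 1))).erase l, (gam n m lam i k ^ 2 - (gam n m lam (i + 1) l' + hb n m lam / 2) ^ 2) := by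
      rw [map_prod]
      refine Finset.prod_congr rfl fun l' hl2 => ?_
      rw [map_sub, map_pow, map_pow, map_add, map_div₀, hmpgik, (hfixip1 l' hl2).2,
        hσmh, map_ofNat]
    have e2 : σm (i + 1) l (∏ l' ∈ Finset.Icc 1 (m (i - 1)), (gam n m lam i k + gam n m lam (i - 1) l' + hb n m lam / 2)) = ∏ l' ∈ Finset.Icc 1 (m (i - 1)), (gam n m lam i k + gam n m lam (i - 1) l' + hb n m lam / 2) := by
      rw [map_prod]
      refine Finset.prod_congr rfl fun l' hl2 => ?_
      rw [map_add, map_add, map_div₀, hmpgik, (hfix1 l' hl2).2, hσmh, map_ofNat]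
    have e3 : σm (i + 1) l (2 * (gam n m lam i k - hb n m lam / 2)) = 2 * (gam n m lam i k - hb n m lam / 2) := by
      rw [map_mul, map_sub, map_div₀, hmpgik, hσmh, map_ofNat]
    have e4 : σm (i + 1) l (∏ l' ∈ (Finset.Icc 1 (m i)).erase k, (gam n m lam i k ^ 2 - gam n m lam i l' ^ 2)) = ∏ l' ∈ (Finset.Icc 1 (m i)).erase k, (gam n m lam i k ^ 2 - gam n m lam i l' ^ 2) := by
      rw [map_prod]
      refine Finset.prod_congr rfl fun l' hl2 => ?_
      rw [map_sub, map_pow, map_pow, hmpgik, (hfixi l' hl2).2]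
    rw [map_div₀, map_mul, map_mul, map_mul, e1a, e1b, e2, e3, e4]
  -- decompositions
  have hD1 : cc n m lam i k = ((gam n m lam i k ^ 2 - (gam n m lam (i + 1) l + hb n m lam / 2) ^ 2) * (∏ l' ∈ (Finset.Icc 1 (m (i + 1))).erase l, (gam n m lam i k ^ 2 - (gam n m lam (i + 1) l' + hb n m lam / 2) ^ 2)) * (∏ l' ∈ Finset.Icc 1 (m (i - 1)), (gam n m lam i k + gam n m lam (i - 1) l' + hb n m lam / 2))) / (2 * (gam n m lam i k - hb n m lam / 2) * (∏ l' ∈ (Finset.Icc 1 (m i)).erase k, (gam n m lam i k ^ 2 - gam n m lam i l' ^ 2))) := by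
    rw [cc, hsplitE, mul_assoc]
  have hD2 : cc n m lam (i + 1) l = ((∏ l' ∈ Finset.Icc 1 (m (i + 1 + 1)), (gam n m lam (i + 1) l ^ 2 - (gam n m lam (i + 1 + 1) l' + hb n m lam / 2) ^ 2)) * ((gam n m lam (i + 1) l + gam n m lam i k + hb n m lam / 2) * (∏ l' ∈ (Finset.Icc 1 (m i)).erase k, (gam n m lam (i + 1) l + gam n m lam i l' + hb n m lam / 2)))) / (2 * (gam n m lam (i + 1) l - hb n m lam / 2) * (∏ l' ∈ (Finset.Icc 1 (m (i + 1))).erase l, (gam n m lam (i + 1) l ^ 2 - gam n m lam (i + 1) l' ^ 2))) := by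
    rw [cc]
    simp only [Nat.add_sub_cancel]
    rw [hsplitT]
  have hD3 : Sfun n m lam i k l = ((RR n m lam i (gam n m lam i k)) * (((∏ l' ∈ Finset.Icc 1 (m (i - 1)), (gam n m lam i k + gam n m lam (i - 1) l' + hb n m lam / 2)) * (∏ l' ∈ Finset.Icc 1 (m (i - 1)), (gam n m lam i k - gam n m lam (i - 1) l' - hb n m lam / 2))) * ((gam n m lam i k ^ 2 - (gam n m lam (i + 1) l + hb n m lam / 2) ^ 2) * (∏ l' ∈ (Finset.Icc 1 (m (i + 1))).erase l, (gam n m lam i k ^ 2 - (gam n m lam (i + 1) l' + hb n m lam / 2) ^ 2))))) / ((gam n m lam i k ^ 2 - (gam n m lam (i + 1) l + hb n m lam / 2) ^ 2) * ((∏ l' ∈ (Finset.Icc 1 (m i)).erase k, (gam n m lam i k ^ 2 - gam n m lam i l' ^ 2)) * (∏ l' ∈ (Finset.Icc 1 (m i)).erase k, (gam n m lam i k ^ 2 - xi n m lam i l' ^ 2)))) := by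
    rw [Sfun, hsplitE, Finset.prod_mul_distrib,
      show (∏ l' ∈ Finset.Icc 1 (m (i - 1)),
          (gam n m lam i k ^ 2 - (gam n m lam (i - 1) l' + hb n m lam / 2) ^ 2)) = (∏ l' ∈ Finset.Icc 1 (m (i - 1)), (gam n m lam i k + gam n m lam (i - 1) l' + hb n m lam / 2)) * (∏ l' ∈ Finset.Icc 1 (m (i - 1)), (gam n m lam i k - gam n m lam (i - 1) l' - hb n m lam / 2)) by
        rw [← Finset.prod_mul_distrib]
        exact Finset.prod_congr rfl fun l' _ => by ring]
  -- nonvanishing facts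
  have hγmne : gam n m lam i k - hb n m lam / 2 ≠ 0 := by
    apply GF.scaled_ne_zero n m lam _ 2 (2 * MvPolynomial.X (Sum.inr (Sum.inl ⟨⟨i, hiN⟩, ⟨k - 1, hk1m⟩⟩)) - MvPolynomial.X (Sum.inl () : GVar n m lam)) (fun w => match w with
      | Sum.inr (Sum.inl s) => if s.1.val = i ∧ s.2.val = k - 1 then (1 : ℂ) else 0
      | _ => 0)
    · rw [gam_eqX n m lam i k hiN hk1m, hb_eqX, map_sub, map_mul, map_ofNat]
      ring
    · simp only [map_sub, map_mul, MvPolynomial.eval_X, MvPolynomial.eval_ofNat]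
      norm_num
  have hγpne : gam n m lam i k + hb n m lam / 2 ≠ 0 := by
    apply GF.scaled_ne_zero n m lam _ 2 (2 * MvPolynomial.X (Sum.inr (Sum.inl ⟨⟨i, hiN⟩, ⟨k - 1, hk1m⟩⟩)) + MvPolynomial.X (Sum.inl () : GVar n m lam)) (fun w => match w with
      | Sum.inr (Sum.inl s) => if s.1.val = i ∧ s.2.val = k - 1 then (1 : ℂ) else 0
      | _ => 0)
    · rw [gam_eqX n m lam i k hiN hk1m, hb_eqX, map_add, map_mul, map_ofNat]
      ring
    · simp only [map_add, map_mul, MvPolynomial.eval_X, MvPolynomial.eval_ofNat]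
      norm_num
  have hγpmne : gam n m lam (i + 1) l - hb n m lam / 2 ≠ 0 := by
    apply GF.scaled_ne_zero n m lam _ 2 (2 * MvPolynomial.X (Sum.inr (Sum.inl ⟨⟨i + 1, hipN⟩, ⟨l - 1, hl1m⟩⟩)) - MvPolynomial.X (Sum.inl () : GVar n m lam)) (fun w => match w with
      | Sum.inr (Sum.inl s) => if s.1.val = i + 1 ∧ s.2.val = l - 1 then (1 : ℂ) else 0
      | _ => 0)
    · rw [gam_eqX n m lam (i + 1) l hipN hl1m, hb_eqX, map_sub, map_mul, map_ofNat]
      ring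
    · simp only [map_sub, map_mul, MvPolynomial.eval_X, MvPolynomial.eval_ofNat]
      norm_num
  have hEne : gam n m lam i k ^ 2 - (gam n m lam (i + 1) l + hb n m lam / 2) ^ 2 ≠ 0 := by
    apply GF.scaled_ne_zero n m lam _ 4 ((2 * MvPolynomial.X (Sum.inr (Sum.inl ⟨⟨i, hiN⟩, ⟨k - 1, hk1m⟩⟩))) ^ 2 - (2 * MvPolynomial.X (Sum.inr (Sum.inl ⟨⟨i + 1, hipN⟩, ⟨l - 1, hl1m⟩⟩)) + MvPolynomial.X (Sum.inl () : GVar n m lam)) ^ 2) (fun w => match w with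
      | Sum.inr (Sum.inl s) => if s.1.val = i ∧ s.2.val = k - 1 then (1 : ℂ) else 0
      | _ => 0)
    · rw [gam_eqX n m lam i k hiN hk1m, gam_eqX n m lam (i + 1) l hipN hl1m, hb_eqX,
        map_sub, map_pow, map_pow, map_add, map_mul, map_mul, map_ofNat]
      ring
    · simp only [map_sub, map_add, map_mul, map_pow, MvPolynomial.eval_X,
        MvPolynomial.eval_ofNat]
      norm_num
  have hQne : (∏ l' ∈ (Finset.Icc 1 (m i)).erase k, (gam n m lam i k ^ 2 - gam n m lam i l' ^ 2)) ≠ 0 := by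
    rw [Finset.prod_ne_zero_iff]
    intro l' hl2
    rw [Finset.mem_erase, Finset.mem_Icc] at hl2
    have hlm : l' - 1 < m i := by omega
    rw [gam_eqX n m lam i k hiN hk1m, gam_eqX n m lam i l' hiN hlm,
      show (algebraMap (GPoly n m lam) (GF n m lam) (MvPolynomial.X (Sum.inr (Sum.inl ⟨⟨i, hiN⟩, ⟨k - 1, hk1m⟩⟩)))) ^ 2 -
          (algebraMap (GPoly n m lam) (GF n m lam)
            (MvPolynomial.X (Sum.inr (Sum.inl ⟨⟨i, hiN⟩, ⟨l' - 1, hlm⟩⟩)))) ^ 2 =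
        algebraMap (GPoly n m lam) (GF n m lam)
          ((MvPolynomial.X (Sum.inr (Sum.inl ⟨⟨i, hiN⟩, ⟨k - 1, hk1m⟩⟩))) ^ 2 - MvPolynomial.X (Sum.inr (Sum.inl ⟨⟨i, hiN⟩, ⟨l' - 1, hlm⟩⟩)) ^ 2) by
        rw [map_sub, map_pow, map_pow]]
    apply GF.ne_zero_of_eval n m lam _ (fun w => match w with
      | Sum.inr (Sum.inl s) => if s.1.val = i ∧ s.2.val = k - 1 then (1 : ℂ) else 0
      | _ => 0)
    simp only [map_sub, map_pow, MvPolynomial.eval_X]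
    norm_num
    rw [if_neg (by omega)]
    norm_num
  have hQpne : (∏ l' ∈ (Finset.Icc 1 (m i)).erase k, (gam n m lam i k ^ 2 - xi n m lam i l' ^ 2)) ≠ 0 := by
    rw [Finset.prod_ne_zero_iff]
    intro l' hl2
    rw [Finset.mem_erase, Finset.mem_Icc] at hl2
    have hlm : l' - 1 < m i := by omega
    rw [xi, gam_eqX n m lam i k hiN hk1m, gam_eqX n m lam i l' hiN hlm, hb_eqX,
      show (algebraMap (GPoly n m lam) (GF n m lam) (MvPolynomial.X (Sum.inr (Sum.inl ⟨⟨i, hiN⟩, ⟨k - 1, hk1m⟩⟩)))) ^ 2 -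
          (algebraMap (GPoly n m lam) (GF n m lam)
              (MvPolynomial.X (Sum.inr (Sum.inl ⟨⟨i, hiN⟩, ⟨l' - 1, hlm⟩⟩))) +
            algebraMap (GPoly n m lam) (GF n m lam) (MvPolynomial.X (Sum.inl () : GVar n m lam))) ^ 2 =
        algebraMap (GPoly n m lam) (GF n m lam)
          ((MvPolynomial.X (Sum.inr (Sum.inl ⟨⟨i, hiN⟩, ⟨k - 1, hk1m⟩⟩))) ^ 2 -
            (MvPolynomial.X (Sum.inr (Sum.inl ⟨⟨i, hiN⟩, ⟨l' - 1, hlm⟩⟩)) + MvPolynomial.X (Sum.inl () : GVar n m lam)) ^ 2) by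
        rw [map_sub, map_pow, map_pow, map_add]]
    apply GF.ne_zero_of_eval n m lam _ (fun w => match w with
      | Sum.inr (Sum.inl s) => if s.1.val = i ∧ s.2.val = k - 1 then (1 : ℂ) else 0
      | _ => 0)
    simp only [map_sub, map_add, map_pow, MvPolynomial.eval_X]
    norm_num
    rw [if_neg (by omega)]
    norm_num
  have hQplne : (∏ l' ∈ (Finset.Icc 1 (m (i + 1))).erase l, (gam n m lam (i + 1) l ^ 2 - gam n m lam (i + 1) l' ^ 2)) ≠ 0 := by
    rw [Finset.prod_ne_zero_iff]
    intro l' hl2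
    rw [Finset.mem_erase, Finset.mem_Icc] at hl2
    have hlm : l' - 1 < m (i + 1) := by omega
    rw [gam_eqX n m lam (i + 1) l hipN hl1m, gam_eqX n m lam (i + 1) l' hipN hlm,
      show (algebraMap (GPoly n m lam) (GF n m lam) (MvPolynomial.X (Sum.inr (Sum.inl ⟨⟨i + 1, hipN⟩, ⟨l - 1, hl1m⟩⟩)))) ^ 2 -
          (algebraMap (GPoly n m lam) (GF n m lam)
            (MvPolynomial.X (Sum.inr (Sum.inl ⟨⟨i + 1, hipN⟩, ⟨l' - 1, hlm⟩⟩)))) ^ 2 =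
        algebraMap (GPoly n m lam) (GF n m lam)
          ((MvPolynomial.X (Sum.inr (Sum.inl ⟨⟨i + 1, hipN⟩, ⟨l - 1, hl1m⟩⟩))) ^ 2 -
            MvPolynomial.X (Sum.inr (Sum.inl ⟨⟨i + 1, hipN⟩, ⟨l' - 1, hlm⟩⟩)) ^ 2) by
        rw [map_sub, map_pow, map_pow]]
    apply GF.ne_zero_of_eval n m lam _ (fun w => match w with
      | Sum.inr (Sum.inl s) => if s.1.val = i + 1 ∧ s.2.val = l - 1 then (1 : ℂ) else 0
      | _ => 0)
    simp only [map_sub, map_pow, MvPolynomial.eval_X]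
    norm_num
    rw [if_neg (by omega)]
    norm_num
  -- the scalar identities
  obtain ⟨sa, sb, sc⟩ := scalar_abc (gam n m lam i k) (gam n m lam (i + 1) l) (hb n m lam) (RR n m lam i (gam n m lam i k)) (∏ l' ∈ Finset.Icc 1 (m (i - 1)), (gam n m lam i k + gam n m lam (i - 1) l' + hb n m lam / 2)) (∏ l' ∈ Finset.Icc 1 (m (i - 1)), (gam n m lam i k - gam n m lam (i - 1) l' - hb n m lam / 2)) (∏ l' ∈ (Finset.Icc 1 (m (i + 1))).erase l, (gam n m lam i k ^ 2 - (gam n m lam (i + 1) l' + hb n m lam / 2) ^ 2))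
    (∏ l' ∈ Finset.Icc 1 (m (i + 1 + 1)), (gam n m lam (i + 1) l ^ 2 - (gam n m lam (i + 1 + 1) l' + hb n m lam / 2) ^ 2)) (∏ l' ∈ (Finset.Icc 1 (m i)).erase k, (gam n m lam (i + 1) l + gam n m lam i l' + hb n m lam / 2)) (∏ l' ∈ (Finset.Icc 1 (m i)).erase k, (gam n m lam i k ^ 2 - gam n m lam i l' ^ 2)) (∏ l' ∈ (Finset.Icc 1 (m i)).erase k, (gam n m lam i k ^ 2 - xi n m lam i l' ^ 2)) (∏ l' ∈ (Finset.Icc 1 (m (i + 1))).erase l, (gam n m lam (i + 1) l ^ 2 - gam n m lam (i + 1) l' ^ 2)) two0 hγmne hγpne hEne hγpmne hQne hQpne hQplne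
  refine ⟨?_, ?_, ?_⟩
  · apply LinearMap.ext
    intro x
    simp only [kap, kap', Mop, Module.End.mul_apply, LinearMap.mulLeft_apply,
      AlgEquiv.toLinearMap_apply]
    rw [map_mul (σm i k) (cc' n m lam i k)
        (σp i k (cc n m lam (i + 1) l * σm (i + 1) l x)),
      Em (cc n m lam (i + 1) l * σm (i + 1) l x), hC1, hD1, hD3]
    linear_combination (cc n m lam (i + 1) l * σm (i + 1) l x) * sa
  · apply LinearMap.ext
    intro x
    simp only [kap, kap', Mop, Module.End.mul_apply, LinearMap.mulLeft_apply,
      AlgEquiv.toLinearMap_apply]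
    rw [map_mul (σm (i + 1) l) (cc' n m lam i k) (σp i k x), hC2,
      map_mul (σm i k) (cc n m lam (i + 1) l)
        (cc' n m lam i k * σm (i + 1) l (σp i k x)),
      map_mul (σm i k) (cc' n m lam i k) (σm (i + 1) l (σp i k x)),
      Eb x, hC1, hC4, hD1, hD3, hD2]
    linear_combination (σm (i + 1) l x) * sb
  · apply LinearMap.ext
    intro x
    simp only [kap, kap', Mop, Module.End.mul_apply, LinearMap.mulLeft_apply,
      AlgEquiv.toLinearMap_apply]
    rw [map_mul (σm i k) (cc' n m lam i k) (σp i k x), Em x, hC1,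
      map_mul (σm (i + 1) l) (cc n m lam i k) ((((RR n m lam i (gam n m lam i k)) * (∏ l' ∈ Finset.Icc 1 (m (i - 1)), (gam n m lam i k - gam n m lam (i - 1) l' - hb n m lam / 2))) / (2 * (gam n m lam i k + hb n m lam / 2) * (∏ l' ∈ (Finset.Icc 1 (m i)).erase k, (gam n m lam i k ^ 2 - xi n m lam i l' ^ 2)))) * x),
      map_mul (σm (i + 1) l) (((RR n m lam i (gam n m lam i k)) * (∏ l' ∈ Finset.Icc 1 (m (i - 1)), (gam n m lam i k - gam n m lam (i - 1) l' - hb n m lam / 2))) / (2 * (gam n m lam i k + hb n m lam / 2) * (∏ l' ∈ (Finset.Icc 1 (m i)).erase k, (gam n m lam i k ^ 2 - xi n m lam i l' ^ 2)))) x,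
      hC5, hC3, hD3, hD2]
    linear_combination (σm (i + 1) l x) * sc
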